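/- Let 0 < λ < 1, m ≥ 3, and let a = (a₁,…,a_m) satisfy 0 = a₁ < a₂ < ⋯ < a_m = 1−λ, with conditions: any three intervals among f_i([0,1]) = [a_i, a_i+λ] have empty common intersection; whenever f_i([0,1]) ∩ f_j([0,1]) ≠ ∅ with i < j, the intersection has length λ^{k_ℓ} for some ℓ (where k₁ > k₂ > ⋯ > k_n ≥ 2 are fixed integers); and f_m([0,1]) is disjoint from f_j([0,1]) for all j < m. Let K be the attractor of {f_i(x)=λx+a_i}. Then for each index j with |f_j([0,1]) ∩ f_{j+1}([0,1])| = λ^{k_ℓ}, the set f_j(K) ∖ (f_j ∘ f_m^{k_ℓ−1})(K) equals ⋃_{i=1}^{m+k_ℓ−3} f_j(K_i), where K₁,…,K_{m+k₁−2} is the partition of K given by: K_{h(j)} = f_j(K) ∖ f_j∘f_m^{k_ℓ−1}(K) for j in the overlap class ℓ, K_{h(j)} = f_j(K) for non-overlapping j < m, K_{m+t} = f_m^{t+1}(K) ∖ f_m^{t+2}(K) for 0 ≤ t < k₁−2, and K_{m+k₁−2} = f_m^{k₁−1}(K). -/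

import Mathlib

theorem partition_piece_decomposition
    (l : ℝ) (hl : 0 < l ∧ l < 1) (m n : ℕ) (hm : 3 ≤ m) (hn : 1 ≤ n)
    (k : ℕ → ℕ) (hkanti : StrictAntiOn k (Set.Icc 1 n)) (hk2 : 2 ≤ k n)
    (a : ℕ → ℝ)
    -- (I)
    (ha1 : a 1 = 0) (ham : a m = 1 - l) (hmono : StrictMonoOn a (Set.Icc 1 m))
    -- (II): no three of the intervals `[a i, a i + l]` intersect
    (hII3 : ∀ i j t, i ∈ Set.Icc 1 m → j ∈ Set.Icc 1 m → t ∈ Set.Icc 1 m →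
      i ≠ j → j ≠ t → i ≠ t →
      Set.Icc (a i) (a i + l) ∩ Set.Icc (a j) (a j + l) ∩ Set.Icc (a t) (a t + l) = ∅)
    -- (II): nonempty pairwise intersections have length `l ^ k ℓ` for some `1 ≤ ℓ ≤ n`
    (hII : ∀ i j, i ∈ Set.Icc 1 m → j ∈ Set.Icc 1 m → i < j →
      (Set.Icc (a i) (a i + l) ∩ Set.Icc (a j) (a j + l)).Nonempty →
      ∃ ℓ ∈ Set.Icc 1 n, a i + l - a j = l ^ k ℓ)
    -- (III): the interval of `f m` is disjoint from all the others
    (hIII : ∀ j, 1 ≤ j → j < m →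
      Set.Icc (a m) (a m + l) ∩ Set.Icc (a j) (a j + l) = ∅)
    -- the attractor
    (K : Set ℝ) (hKne : K.Nonempty) (hKc : IsCompact K)
    (hK : K = ⋃ i ∈ Set.Icc 1 m, (fun x => l * x + a i) '' K)
    -- the relabeling `h` of `{1, …, m-1}` and the partition pieces `K'`
    (h : ℕ → ℕ) (hbij : Set.BijOn h (Set.Icc 1 (m - 1)) (Set.Icc 1 (m - 1)))
    (K' : ℕ → Set ℝ)
    (hK'over : ∀ j ∈ Set.Icc 1 (m - 1), ∀ ℓ ∈ Set.Icc 1 n,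
      a j + l - a (j + 1) = l ^ k ℓ →
      K' (h j) = (fun x => l * x + a j) '' K \
        ((fun x => l * x + a j) ∘ (fun x => l * x + a m)^[k ℓ - 1]) '' K)
    (hK'non : ∀ j ∈ Set.Icc 1 (m - 1),
      Set.Icc (a j) (a j + l) ∩ Set.Icc (a (j + 1)) (a (j + 1) + l) = ∅ →
      K' (h j) = (fun x => l * x + a j) '' K)
    (hK'mid : ∀ t, t < k 1 - 2 →
      K' (m + t) = (fun x => l * x + a m)^[t + 1] '' K \
        (fun x => l * x + a m)^[t + 2] '' K)
    (hK'last : K' (m + k 1 - 2) = (fun x => l * x + a m)^[k 1 - 1] '' K) :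
    ∀ j ∈ Set.Icc 1 (m - 1), ∀ ℓ ∈ Set.Icc 1 n,
      a j + l - a (j + 1) = l ^ k ℓ →
      (fun x => l * x + a j) '' K \
          ((fun x => l * x + a j) ∘ (fun x => l * x + a m)^[k ℓ - 1]) '' K =
        ⋃ i ∈ Set.Icc 1 (m + k ℓ - 3), (fun x => l * x + a j) '' K' i := by
  classical
  obtain ⟨hl0, hl1⟩ := hl
  -- basic facts about k
  have hkfacts : ∀ ℓ', ℓ' ∈ Set.Icc 1 n → 2 ≤ k ℓ' ∧ k ℓ' ≤ k 1 := by
    intro ℓ' hℓ'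
    obtain ⟨h1, h2⟩ := Set.mem_Icc.mp hℓ'
    constructor
    · rcases eq_or_lt_of_le h2 with hE | hE
      · exact hE ▸ hk2
      · exact le_trans hk2
          (hkanti (Set.mem_Icc.mpr ⟨h1, h2⟩) (Set.mem_Icc.mpr ⟨hn, le_refl n⟩) hE).le
    · rcases eq_or_lt_of_le h1 with hE | hE
      · rw [← hE]
      · exact (hkanti (Set.mem_Icc.mpr ⟨le_refl 1, hn⟩) (Set.mem_Icc.mpr ⟨h1, h2⟩) hE).le
  -- bounds on a
  have haup : ∀ i, 1 ≤ i → i ≤ m → a i ≤ 1 - l := by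
    intro i h1 h2
    rw [← ham]
    exact hmono.monotoneOn (Set.mem_Icc.mpr ⟨h1, h2⟩)
      (Set.mem_Icc.mpr ⟨by omega, le_refl m⟩) h2
  have halow : ∀ i, 1 ≤ i → i ≤ m → 0 ≤ a i := by
    intro i h1 h2
    rw [← ha1]
    exact hmono.monotoneOn (Set.mem_Icc.mpr ⟨le_refl 1, by omega⟩)
      (Set.mem_Icc.mpr ⟨h1, h2⟩) h1
  -- images are inside K
  have hKsub : ∀ i, 1 ≤ i → i ≤ m → (fun x => l * x + a i) '' K ⊆ K := by
    intro i h1 h2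
    intro y hy
    rw [hK]
    exact Set.mem_biUnion (Set.mem_Icc.mpr ⟨h1, h2⟩) hy
  -- K ⊆ [0,1]
  have hK01 : ∀ x ∈ K, 0 ≤ x ∧ x ≤ 1 := by
    have hsup : sSup K ∈ K := hKc.sSup_mem hKne
    have hinf : sInf K ∈ K := hKc.sInf_mem hKne
    have hsup1 : sSup K ≤ 1 := by
      have hsup' := hK.subset hsup
      simp only [Set.mem_iUnion, Set.mem_image, Set.mem_Icc] at hsup'
      obtain ⟨i, ⟨h1, h2⟩, x, hx, hfx⟩ := hsup'
      have hxle : x ≤ sSup K := le_csSup hKc.bddAbove hx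
      have := haup i h1 h2
      nlinarith
    have hinf0 : 0 ≤ sInf K := by
      have hinf' := hK.subset hinf
      simp only [Set.mem_iUnion, Set.mem_image, Set.mem_Icc] at hinf'
      obtain ⟨i, ⟨h1, h2⟩, x, hx, hfx⟩ := hinf'
      have hxle : sInf K ≤ x := csInf_le hKc.bddBelow hx
      have := halow i h1 h2
      nlinarith
    intro x hx
    exact ⟨le_trans hinf0 (csInf_le hKc.bddBelow hx),
      le_trans (le_csSup hKc.bddAbove hx) hsup1⟩
  -- interval bounds for images
  have hmemIcc : ∀ i, 1 ≤ i → i ≤ m → ∀ y ∈ (fun x => l * x + a i) '' K,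
      a i ≤ y ∧ y ≤ a i + l := by
    rintro i h1 h2 y ⟨x, hx, rfl⟩
    obtain ⟨hx0, hx1⟩ := hK01 x hx
    constructor <;> simp only [] <;> nlinarith
  -- iterate formula for f m
  have hiterm : ∀ s x, (fun x => l * x + a m)^[s] x = l ^ s * x + (1 - l ^ s) := by
    intro s
    induction s with
    | zero => intro x; simp
    | succ s ih =>
      intro x
      rw [Function.iterate_succ_apply', ih x]
      show l * (l ^ s * x + (1 - l ^ s)) + a m = _
      rw [ham]; ring
  -- iterates of f m map K into K
  have hiterKsub : ∀ s, (fun x => l * x + a m)^[s] '' K ⊆ K := by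
    intro s
    induction s with
    | zero => simp
    | succ s ih =>
      rw [Function.iterate_succ', Set.image_comp]
      exact le_trans (Set.image_mono ih) (hKsub m (by omega) (le_refl m))
  -- chain of iterates
  have hchain : ∀ s t, s ≤ t →
      (fun x => l * x + a m)^[t] '' K ⊆ (fun x => l * x + a m)^[s] '' K := by
    intro s t hst
    have heq : s + (t - s) = t := by omega
    conv_lhs => rw [← heq]
    rw [Function.iterate_add, Set.image_comp]
    exact Set.image_mono (hiterKsub (t - s))
  -- scaling stays in K
  have hscale : ∀ s, ∀ x ∈ K, l ^ s * x ∈ K := by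
    intro s
    induction s with
    | zero => intro x hx; simpa using hx
    | succ s ih =>
      intro x hx
      have hmem : l * (l ^ s * x) + a 1 ∈ K :=
        hKsub 1 (le_refl 1) (by omega) ⟨l ^ s * x, ih x hx, rfl⟩
      have he : l * (l ^ s * x) + a 1 = l ^ (s + 1) * x := by rw [ha1]; ring
      rwa [he] at hmem
  -- disjointness of f_j K (j < m) from iterates of f m
  have hdisj : ∀ i, 1 ≤ i → i < m → ∀ s, 1 ≤ s → ∀ y,
      y ∈ (fun x => l * x + a i) '' K →
      y ∈ (fun x => l * x + a m)^[s] '' K → False := by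
    intro i h1 h2 s hs y hy1 hy2
    have hy2' : y ∈ (fun x => l * x + a m)^[1] '' K := hchain 1 s hs hy2
    have hy2'' : y ∈ (fun x => l * x + a m) '' K := by
      simpa using hy2'
    have hm1 := hmemIcc m (by omega) (le_refl m) y hy2''
    have hi1 := hmemIcc i h1 (by omega) y hy1
    have hempty := hIII i h1 h2
    have : y ∈ (∅ : Set ℝ) := by
      rw [← hempty]
      exact ⟨Set.mem_Icc.mpr hm1, Set.mem_Icc.mpr hi1⟩
    exact this
  -- overlap shift: f_{j'} ∘ f_m^[c-1] lands inside f_{j'+1} K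
  have hshift : ∀ j', 1 ≤ j' → j' ≤ m - 1 → ∀ c', 1 ≤ c' →
      a j' + l - a (j' + 1) = l ^ c' →
      ((fun x => l * x + a j') ∘ (fun x => l * x + a m)^[c' - 1]) '' K
        ⊆ (fun x => l * x + a (j' + 1)) '' K := by
    rintro j' h1 h2 c' hc' hov' y ⟨x, hx, rfl⟩
    refine ⟨l ^ (c' - 1) * x, hscale (c' - 1) x hx, ?_⟩
    show l * (l ^ (c' - 1) * x) + a (j' + 1)
        = l * ((fun x => l * x + a m)^[c' - 1] x) + a j'
    rw [hiterm]
    have hpow : l * l ^ (c' - 1) = l ^ c' := by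
      rw [← pow_succ']
      congr 1; omega
    nlinarith [hov', hpow]
  -- now the main work
  intro j hj ℓ hℓ hov
  obtain ⟨hj1, hj2⟩ := Set.mem_Icc.mp hj
  obtain ⟨hc2, hcle⟩ := hkfacts ℓ hℓ
  -- the core set equality
  have key : K \ (fun x => l * x + a m)^[k ℓ - 1] '' K
      = ⋃ i ∈ Set.Icc 1 (m + k ℓ - 3), K' i := by
    apply Set.Subset.antisymm
    · rintro x ⟨hxK, hxS⟩
      -- the case x ∈ f_m '' K
      have casem : x ∈ (fun x => l * x + a m) '' K →
          x ∈ ⋃ i ∈ Set.Icc 1 (m + k ℓ - 3), K' i := by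
        intro hx
        have hex : ∃ r, x ∉ (fun x => l * x + a m)^[r] '' K := ⟨k ℓ - 1, hxS⟩
        obtain ⟨N, hNfind⟩ : ∃ N, Nat.find hex = N := ⟨_, rfl⟩
        have hN : x ∉ (fun x => l * x + a m)^[N] '' K := by
          rw [← hNfind]; exact Nat.find_spec hex
        have hNle : N ≤ k ℓ - 1 := by
          rw [← hNfind]; exact Nat.find_min' hex hxS
        have h0 : x ∈ (fun x => l * x + a m)^[0] '' K := by simpa using hxK
        have h1 : x ∈ (fun x => l * x + a m)^[1] '' K := by simpa using hx
        have hN0 : N ≠ 0 := by intro hE; rw [hE] at hN; exact hN h0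
        have hN1 : N ≠ 1 := by intro hE; rw [hE] at hN; exact hN h1
        have hrmem : x ∈ (fun x => l * x + a m)^[N - 1] '' K :=
          not_not.mp (Nat.find_min hex (by omega : N - 1 < Nat.find hex))
        refine Set.mem_iUnion₂.mpr ⟨m + (N - 2), ?_, ?_⟩
        · exact Set.mem_Icc.mpr ⟨by omega, by omega⟩
        · rw [hK'mid (N - 2) (by omega)]
          constructor
          · have he : N - 2 + 1 = N - 1 := by omega
            rwa [he]
          · have he : N - 2 + 2 = N := by omega
            rw [he]
            exact hN
      have main : ∀ d j', 1 ≤ j' → j' ≤ m → m - j' ≤ d →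
          x ∈ (fun x => l * x + a j') '' K →
          x ∈ ⋃ i ∈ Set.Icc 1 (m + k ℓ - 3), K' i := by
        intro d
        induction d with
        | zero =>
          intro j' h1 h2 h3 hx
          have : j' = m := by omega
          exact casem (this ▸ hx)
        | succ d ih =>
          intro j' h1 h2 h3 hx
          by_cases hjm' : j' = m
          · exact casem (hjm' ▸ hx)
          · have h2' : j' ≤ m - 1 := by omega
            by_cases hint : (Set.Icc (a j') (a j' + l)
                ∩ Set.Icc (a (j' + 1)) (a (j' + 1) + l)).Nonempty
            · obtain ⟨ℓ', hℓ', hov'⟩ := hII j' (j' + 1)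
                (Set.mem_Icc.mpr ⟨h1, by omega⟩)
                (Set.mem_Icc.mpr ⟨by omega, by omega⟩) (by omega) hint
              obtain ⟨hc2', _⟩ := hkfacts ℓ' hℓ'
              have hK'j := hK'over j' (Set.mem_Icc.mpr ⟨h1, h2'⟩) ℓ' hℓ' hov'
              by_cases hxin : x ∈ ((fun x => l * x + a j')
                  ∘ (fun x => l * x + a m)^[k ℓ' - 1]) '' K
              · have hx' : x ∈ (fun x => l * x + a (j' + 1)) '' K :=
                  hshift j' h1 h2' (k ℓ') (by omega) hov' hxin
                exact ih (j' + 1) (by omega) (by omega) (by omega) hx'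
              · refine Set.mem_iUnion₂.mpr ⟨h j', ?_, ?_⟩
                · have hmem := hbij.mapsTo (Set.mem_Icc.mpr ⟨h1, h2'⟩)
                  obtain ⟨ha', hb'⟩ := Set.mem_Icc.mp hmem
                  exact Set.mem_Icc.mpr ⟨ha', by omega⟩
                · rw [hK'j]; exact ⟨hx, hxin⟩
            · have hK'j := hK'non j' (Set.mem_Icc.mpr ⟨h1, h2'⟩)
                (Set.not_nonempty_iff_eq_empty.mp hint)
              refine Set.mem_iUnion₂.mpr ⟨h j', ?_, ?_⟩
              · have hmem := hbij.mapsTo (Set.mem_Icc.mpr ⟨h1, h2'⟩)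
                obtain ⟨ha', hb'⟩ := Set.mem_Icc.mp hmem
                exact Set.mem_Icc.mpr ⟨ha', by omega⟩
              · rw [hK'j]; exact hx
      have hxU := hK.subset hxK
      simp only [Set.mem_iUnion, Set.mem_Icc] at hxU
      obtain ⟨j0, ⟨hj01, hj02⟩, hxj0⟩ := hxU
      exact main m j0 hj01 hj02 (by omega) hxj0
    · intro x hx
      simp only [Set.mem_iUnion, Set.mem_Icc] at hx
      obtain ⟨i, ⟨hi1, hi2⟩, hxi⟩ := hx
      by_cases him : i ≤ m - 1
      · obtain ⟨j', hj'mem, hji⟩ := hbij.surjOn (Set.mem_Icc.mpr ⟨hi1, him⟩)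
        obtain ⟨h1, h2⟩ := Set.mem_Icc.mp hj'mem
        subst hji
        by_cases hint : (Set.Icc (a j') (a j' + l)
            ∩ Set.Icc (a (j' + 1)) (a (j' + 1) + l)).Nonempty
        · obtain ⟨ℓ', hℓ', hov'⟩ := hII j' (j' + 1)
            (Set.mem_Icc.mpr ⟨h1, by omega⟩)
            (Set.mem_Icc.mpr ⟨by omega, by omega⟩) (by omega) hint
          rw [hK'over j' hj'mem ℓ' hℓ' hov'] at hxi
          obtain ⟨hx1, hx2⟩ := hxi
          refine ⟨hKsub j' h1 (by omega) hx1, fun hcon => ?_⟩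
          exact hdisj j' h1 (by omega) (k ℓ - 1) (by omega) x hx1 hcon
        · rw [hK'non j' hj'mem (Set.not_nonempty_iff_eq_empty.mp hint)] at hxi
          refine ⟨hKsub j' h1 (by omega) hxi, fun hcon => ?_⟩
          exact hdisj j' h1 (by omega) (k ℓ - 1) (by omega) x hxi hcon
      · have he : i = m + (i - m) := by omega
        rw [he, hK'mid (i - m) (by omega)] at hxi
        obtain ⟨hx1, hx2⟩ := hxi
        refine ⟨hiterKsub _ hx1, fun hcon => ?_⟩
        exact hx2 (hchain (i - m + 2) (k ℓ - 1) (by omega) hcon)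
  -- conclude by pushing the affine map through
  have hinj : Function.Injective (fun x => l * x + a j) := by
    intro x y hxy
    simp only [] at hxy
    have : l * x = l * y := by linarith
    exact mul_left_cancel₀ (ne_of_gt hl0) this
  rw [Set.image_comp, ← Set.image_diff hinj, key, Set.image_iUnion₂]
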